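/- For all p,q≥0, the rational functions R_k satisfy the identity 1 − x²·(R_p(x²) + R_q(x²)) = x·U_{p+q+1}(1/(2x)) / (U_p(1/(2x))·U_q(1/(2x))), where U_m denotes the Chebyshev polynomials of the second kind. -/

import Mathlib

/-- Chebyshev polynomials of the second kind, as real-valued functions. -/
def chebU : ℕ → ℝ → ℝ
  | 0, _ => 1
  | 1, t => 2 * t
  | (r + 2), t => 2 * t * chebU (r + 1) t - chebU r t

/-- The rational functions `R_k`: `R_0(x) = 0`, `R_k(x) = 1/(1 - x·R_{k-1}(x))`. -/
noncomputable def Rfun : ℕ → ℝ → ℝ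
  | 0, _ => 0
  | (k + 1), x => 1 / (1 - x * Rfun k x)

lemma chebProd (t : ℝ) : ∀ q p : ℕ,
    chebU (p+1) t * chebU q t + chebU p t * chebU (q+1) t - 2*t*(chebU p t * chebU q t)
      = chebU (p+q+1) t ∧
    chebU (p+1) t * chebU (q+1) t - chebU p t * chebU q t = chebU (p+q+2) t := by
  intro q
  induction q with
  | zero =>
    intro p
    constructor
    · simp [chebU]; ring
    · show chebU (p+1) t * (2*t) - chebU p t * 1 = chebU (p+2) t
      simp only [chebU]; ring
  | succ q ih =>
    intro p
    obtain ⟨hA, hB⟩ := ih p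
    constructor
    · have : chebU (q+2) t = 2*t*chebU (q+1) t - chebU q t := by simp [chebU]
      rw [show p + (q+1) + 1 = p + q + 2 from by ring, ← hB, this]; ring
    · have h2 : chebU (q+2) t = 2*t*chebU (q+1) t - chebU q t := by simp [chebU]
      have h3 : chebU (p+(q+1)+2) t = 2*t*chebU (p+q+2) t - chebU (p+q+1) t := by
        show chebU (p+q+3) t = _
        simp [chebU]
      rw [h3, ← hA, ← hB, h2]; ring

lemma keyR (x : ℝ) (hx : x ≠ 0) : ∀ k : ℕ,
    (∀ m, m < k → 1 - x ^ 2 * Rfun m (x ^ 2) ≠ 0) →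
    (1 - x ^ 2 * Rfun k (x ^ 2)) * chebU k (1/(2*x)) = x * chebU (k+1) (1/(2*x)) := by
  intro k
  induction k with
  | zero => intro _; simp [Rfun, chebU]; field_simp
  | succ k ih =>
    intro h
    have hk : 1 - x ^ 2 * Rfun k (x ^ 2) ≠ 0 := h k (Nat.lt_succ_self k)
    have ihk := ih (fun m hm => h m (hm.trans (Nat.lt_succ_self k)))
    have hU2 : chebU (k+2) (1/(2*x)) = 2*(1/(2*x))*chebU (k+1) (1/(2*x)) - chebU k (1/(2*x)) := by
      simp [chebU]
    rw [show Rfun (k+1) (x^2) = 1/(1 - x^2 * Rfun k (x^2)) from rfl, hU2]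
    field_simp
    rw [show x * 2 = 2 * x from mul_comm _ _]
    linear_combination x * ihk

/-- For all `p, q ≥ 0`,
`1 − x²·(R_p(x²) + R_q(x²)) = x·U_{p+q+1}(1/(2x)) / (U_p(1/(2x))·U_q(1/(2x)))`,
for every `x` in a domain where all the denominators involved are nonzero. -/
theorem one_sub_sq_mul_R_add_R (p q : ℕ) (x : ℝ) (hx : x ≠ 0)
    (hp : ∀ m, m < p → 1 - x ^ 2 * Rfun m (x ^ 2) ≠ 0)
    (hq : ∀ m, m < q → 1 - x ^ 2 * Rfun m (x ^ 2) ≠ 0)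
    (hUp : chebU p (1 / (2 * x)) ≠ 0) (hUq : chebU q (1 / (2 * x)) ≠ 0) :
    1 - x ^ 2 * (Rfun p (x ^ 2) + Rfun q (x ^ 2)) =
      x * chebU (p + q + 1) (1 / (2 * x)) / (chebU p (1 / (2 * x)) * chebU q (1 / (2 * x))) := by
  have kp := keyR x hx p hp
  have kq := keyR x hx q hq
  have hA := (chebProd (1/(2*x)) q p).1
  have h2t : 2 * (1/(2*x)) * x = 1 := by field_simp
  rw [eq_div_iff (mul_ne_zero hUp hUq)]
  linear_combination chebU q (1/(2*x)) * kp + chebU p (1/(2*x)) * kq + x * hA +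
    chebU p (1/(2*x)) * chebU q (1/(2*x)) * h2t
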